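/- For any reals λ₀ > 0 and λ₁ ≥ 0, any state U₀ ∈ 𝒢 and any state U₁ ∈ 𝒢̄, the state λ₀U₀ + λ₁U₁ (componentwise operations) belongs to 𝒢. -/

import Mathlib

open Matrix

noncomputable section

/-- A state is a triple `(ρ, m, E)` with `ρ : ℝ`, `m : ℝ²`, `E` a 2×2 real matrix. -/
abbrev Mat2 := Matrix (Fin 2) (Fin 2) ℝ

/-- The pressure tensor `p(U) = 2E - (1/ρ) m mᵀ`. -/
def pTensor (ρ : ℝ) (m : Fin 2 → ℝ) (E : Mat2) : Mat2 :=
  (2 : ℝ) • E - ρ⁻¹ • vecMulVec m m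

/-- `φ(U; z, u*) = zᵀEz − (m·z)(u*·z) + (ρ/2)(u*·z)²`. -/
def phi (ρ : ℝ) (m : Fin 2 → ℝ) (E : Mat2) (z u : Fin 2 → ℝ) : ℝ :=
  z ⬝ᵥ (E *ᵥ z) - (m ⬝ᵥ z) * (u ⬝ᵥ z) + (ρ / 2) * (u ⬝ᵥ z) ^ 2

/-- The admissible set `𝒢`: states with positive density and positive definite pressure tensor. -/
def G : Set (ℝ × (Fin 2 → ℝ) × Mat2) :=
  {U | 0 < U.1 ∧ (pTensor U.1 U.2.1 U.2.2).PosDef}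

/-- The closed admissible set `𝒢̄`: states (so `E` symmetric) with `ρ ≥ 0` and
`φ(U; z, u*) ≥ 0` for all `z, u*`. -/
def Gbar : Set (ℝ × (Fin 2 → ℝ) × Mat2) :=
  {U | 0 ≤ U.1 ∧ U.2.2.IsSymm ∧ ∀ z u : Fin 2 → ℝ, 0 ≤ phi U.1 U.2.1 U.2.2 z u}

lemma dot_pTensor (ρ : ℝ) (m : Fin 2 → ℝ) (E : Mat2) (z : Fin 2 → ℝ) :
    z ⬝ᵥ (pTensor ρ m E *ᵥ z) = 2 * (z ⬝ᵥ (E *ᵥ z)) - ρ⁻¹ * (m ⬝ᵥ z)^2 := by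
  simp [pTensor, vecMulVec, mulVec, dotProduct, Fin.sum_univ_two, Matrix.sub_apply,
    Matrix.smul_apply]
  ring

lemma isHermitian_iff_isSymm' {M : Mat2} : M.IsHermitian ↔ M.IsSymm := by
  unfold Matrix.IsHermitian Matrix.IsSymm
  constructor <;> intro h <;> ext i j <;>
    simpa using congrFun (congrFun h i) j

lemma symm_of_posdef {ρ : ℝ} {m : Fin 2 → ℝ} {E : Mat2}
    (h : (pTensor ρ m E).PosDef) : E.IsSymm := by
  have hp : (pTensor ρ m E).IsSymm := isHermitian_iff_isSymm'.mp h.isHermitian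
  have hv : (vecMulVec m m).IsSymm := by
    ext i j; simp [Matrix.IsSymm, vecMulVec, Matrix.transpose_apply, mul_comm]
  have h2 : ((2:ℝ) • E).IsSymm := by
    have := hp
    unfold pTensor at this
    have : ((2:ℝ) • E) = pTensor ρ m E + ρ⁻¹ • vecMulVec m m := by
      unfold pTensor; ring_nf; abel
    rw [this]
    exact (hp.add (hv.smul _ ))
  ext i j
  have := congrFun (congrFun h2 i) j
  simp [Matrix.IsSymm, Matrix.transpose_apply] at this ⊢
  linarith


/-- For `λ₀ > 0`, `λ₁ ≥ 0`, `U₀ ∈ 𝒢` and `U₁ ∈ 𝒢̄`, one has `λ₀U₀ + λ₁U₁ ∈ 𝒢`. -/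
theorem combination_mem_admissible (lam0 lam1 : ℝ) (h0 : 0 < lam0) (h1 : 0 ≤ lam1)
    (U0 U1 : ℝ × (Fin 2 → ℝ) × Mat2) (hU0 : U0 ∈ G) (hU1 : U1 ∈ Gbar) :
    lam0 • U0 + lam1 • U1 ∈ G := by
  obtain ⟨hρ0, hpd0⟩ := hU0
  obtain ⟨hρ1, hE1s, hφ1⟩ := hU1
  obtain ⟨ρ0, m0, E0⟩ := U0
  obtain ⟨ρ1, m1, E1⟩ := U1
  simp only [Prod.smul_mk, Prod.mk_add_mk, smul_eq_mul] at *
  set ρ := lam0 * ρ0 + lam1 * ρ1 with hρdef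
  have hρ : 0 < ρ := by nlinarith
  have hE0s : E0.IsSymm := symm_of_posdef hpd0
  refine ⟨hρ, posDef_iff_dotProduct_mulVec.mpr ⟨?_, ?_⟩⟩
  · -- Hermitian
    rw [isHermitian_iff_isSymm']
    have hv : (vecMulVec (lam0 • m0 + lam1 • m1) (lam0 • m0 + lam1 • m1)).IsSymm := by
      ext i j; simp [Matrix.IsSymm, vecMulVec, Matrix.transpose_apply, mul_comm]
    unfold pTensor
    exact (((hE0s.smul lam0).add (hE1s.smul lam1)).smul 2).sub (hv.smul _)
  · -- positivity
    intro z hz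
    have hzz : 0 < z ⬝ᵥ z := by
      have h0' : z ⬝ᵥ z ≠ 0 := fun h => hz (dotProduct_self_eq_zero.mp h)
      have hnn : 0 ≤ z ⬝ᵥ z := by
        simp only [dotProduct, Fin.sum_univ_two]
        nlinarith [sq_nonneg (z 0), sq_nonneg (z 1)]
      exact lt_of_le_of_ne hnn (Ne.symm h0')
    set m : Fin 2 → ℝ := lam0 • m0 + lam1 • m1 with hm
    set E : Mat2 := lam0 • E0 + lam1 • E1 with hE
    set u : Fin 2 → ℝ := ((m ⬝ᵥ z) / (ρ * (z ⬝ᵥ z))) • z with hu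
    have hut : u ⬝ᵥ z = (m ⬝ᵥ z) / ρ := by
      rw [hu, smul_dotProduct, smul_eq_mul, div_mul_eq_mul_div, mul_comm ρ (z ⬝ᵥ z),
        ← div_div, mul_div_assoc, div_self hzz.ne', mul_one]
    have hmz : m ⬝ᵥ z = lam0 * (m0 ⬝ᵥ z) + lam1 * (m1 ⬝ᵥ z) := by
      rw [hm, add_dotProduct, smul_dotProduct, smul_dotProduct, smul_eq_mul, smul_eq_mul]
    have hEz : z ⬝ᵥ (E *ᵥ z) = lam0 * (z ⬝ᵥ (E0 *ᵥ z)) + lam1 * (z ⬝ᵥ (E1 *ᵥ z)) := by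
      rw [hE, add_mulVec, smul_mulVec, smul_mulVec, dotProduct_add,
        dotProduct_smul, dotProduct_smul, smul_eq_mul, smul_eq_mul]
    have hlin : phi ρ m E z u = lam0 * phi ρ0 m0 E0 z u + lam1 * phi ρ1 m1 E1 z u := by
      unfold phi
      rw [hmz, hEz, hρdef]
      ring
    have hstar : star z = z := by ext i; simp
    rw [hstar]
    have hq0 : 0 < z ⬝ᵥ (pTensor ρ0 m0 E0 *ᵥ z) := by
      have h' := hpd0.dotProduct_mulVec_pos hz
      rwa [hstar] at h'
    have hd0 := dot_pTensor ρ0 m0 E0 z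
    have hinv0 : ρ0 * ρ0⁻¹ = 1 := mul_inv_cancel₀ hρ0.ne'
    have hφ0 : 0 < phi ρ0 m0 E0 z u := by
      unfold phi
      nlinarith [sq_nonneg (ρ0 * (u ⬝ᵥ z) - m0 ⬝ᵥ z), hq0, hρ0, hd0, hinv0]
    have hφu1 := hφ1 z u
    have key : z ⬝ᵥ (pTensor ρ m E *ᵥ z) = 2 * phi ρ m E z u := by
      rw [dot_pTensor]
      unfold phi
      rw [hut]
      have hρne : ρ ≠ 0 := hρ.ne'
      field_simp
      ring
    rw [key, hlin]
    nlinarith [hφ0, hφu1, h0, h1]
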